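/- Let k ∈ ℝ³ be nonzero and let t be a trace-free real symmetric 3×3 matrix such that k × (t k) = 0 (vanishing of the symbol of rot₁ div₂ applied to t). Then there exists a trace-free real symmetric 3×3 matrix χ with σ_k(Q)(χ) = t. Conversely, for every trace-free symmetric χ, the matrix σ_k(Q)(χ) is trace-free symmetric and satisfies k × (σ_k(Q)(χ) k) = 0. (Exactness of the symbol sequence of the momentum complex at the slot S₀² → rot₁ div₂.) -/
import Mathlib


open scoped BigOperators

/-- The Levi-Civita symbol `ε_{ijk}` on three indices. -/
def eps : Fin 3 → Fin 3 → Fin 3 → ℝ := fun i j k =>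
  if (i, j, k) = ((0 : Fin 3), (1 : Fin 3), (2 : Fin 3)) ∨
     (i, j, k) = ((1 : Fin 3), (2 : Fin 3), (0 : Fin 3)) ∨
     (i, j, k) = ((2 : Fin 3), (0 : Fin 3), (1 : Fin 3)) then 1
  else if (i, j, k) = ((2 : Fin 3), (1 : Fin 3), (0 : Fin 3)) ∨
     (i, j, k) = ((1 : Fin 3), (0 : Fin 3), (2 : Fin 3)) ∨
     (i, j, k) = ((0 : Fin 3), (2 : Fin 3), (1 : Fin 3)) then -1
  else 0

/-- The Kronecker delta `δ_{ij}`. -/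
def kdelta (i j : Fin 3) : ℝ := if i = j then 1 else 0

/-- The cross product on `ℝ³`: `(a × b)_i = Σ_{j,l} ε_{ijl} a_j b_l`. -/
def cross (a b : Fin 3 → ℝ) : Fin 3 → ℝ := fun i => ∑ j, ∑ l, eps i j l * a j * b l

/-- The symbol of `rot₂`:
`(σ_k(rot₂)(h))_{ij} = Σ_{ℓ,m} ( ε_{iℓm} k_ℓ h_{mj} + ε_{jℓm} k_ℓ h_{mi} )`. -/
def sigRot2 (k : Fin 3 → ℝ) (h : Fin 3 → Fin 3 → ℝ) : Fin 3 → Fin 3 → ℝ :=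
  fun i j => ∑ l, ∑ m, (eps i l m * k l * h m j + eps j l m * k l * h m i)

/-- The symbol of `Q`:
`(σ_k(Q)(h))_{ij} = 2( 2 Σ_ℓ k_ℓ ( k_i h_{jℓ} + k_j h_{iℓ} )
  − (4/3) (Σ_{ℓ,m} k_ℓ k_m h_{ℓm}) δ_{ij} − 2 |k|² h_{ij}
  + ( |k|² δ_{ij} − k_i k_j ) (tr h) )`. -/
noncomputable def sigQ (k : Fin 3 → ℝ) (h : Fin 3 → Fin 3 → ℝ) : Fin 3 → Fin 3 → ℝ :=
  fun i j => 2 * (2 * (∑ l, k l * (k i * h j l + k j * h i l))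
    - (4/3) * (∑ l, ∑ m, k l * k m * h l m) * kdelta i j
    - 2 * (∑ l, k l ^ 2) * h i j
    + ((∑ l, k l ^ 2) * kdelta i j - k i * k j) * (∑ l, h l l))

lemma kdelta_symm' (i j : Fin 3) : kdelta i j = kdelta j i := by
  simp [kdelta, eq_comm]

set_option maxHeartbeats 4000000 in
set_option maxRecDepth 8000 in
/-- exactness of the symbol sequence of the momentum complex at the slot
`S₀² → rot₁ div₂`: for `k ≠ 0`, every trace-free symmetric `t` with `k × (t k) = 0`
is `σ_k(Q)(χ)` for some trace-free symmetric `χ`; conversely every `σ_k(Q)(χ)` is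
trace-free symmetric with `k × (σ_k(Q)(χ) k) = 0`. -/
theorem stmt14 (k : Fin 3 → ℝ) (hk : k ≠ 0) :
    (∀ t : Fin 3 → Fin 3 → ℝ, (∀ i j, t i j = t j i) → (∑ i, t i i) = 0 →
      (∀ i, cross k (fun a => ∑ j, t a j * k j) i = 0) →
      ∃ χ : Fin 3 → Fin 3 → ℝ, (∀ i j, χ i j = χ j i) ∧ (∑ i, χ i i) = 0 ∧
        ∀ i j, sigQ k χ i j = t i j) ∧
    (∀ χ : Fin 3 → Fin 3 → ℝ, (∀ i j, χ i j = χ j i) → (∑ i, χ i i) = 0 →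
      (∀ i j, sigQ k χ i j = sigQ k χ j i) ∧ (∑ i, sigQ k χ i i) = 0 ∧
        (∀ i, cross k (fun a => ∑ j, sigQ k χ a j * k j) i = 0)) := by
  have hK : k 0 ^ 2 + k 1 ^ 2 + k 2 ^ 2 ≠ 0 := by
    intro h
    apply hk
    have h0 : k 0 = 0 := by nlinarith [sq_nonneg (k 0), sq_nonneg (k 1), sq_nonneg (k 2)]
    have h1 : k 1 = 0 := by nlinarith [sq_nonneg (k 0), sq_nonneg (k 1), sq_nonneg (k 2)]
    have h2 : k 2 = 0 := by nlinarith [sq_nonneg (k 0), sq_nonneg (k 1), sq_nonneg (k 2)]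
    funext a
    fin_cases a
    · exact h0
    · exact h1
    · exact h2
  constructor
  · -- hard direction
    intro t ht htr hc
    set K := k 0 ^ 2 + k 1 ^ 2 + k 2 ^ 2 with hKdef
    have Tr : t 0 0 + t 1 1 + t 2 2 = 0 := by
      have := htr; simpa [Fin.sum_univ_three] using this
    have C0 : k 1 * (t 2 0 * k 0 + t 2 1 * k 1 + t 2 2 * k 2)
        - k 2 * (t 1 0 * k 0 + t 1 1 * k 1 + t 1 2 * k 2) = 0 := by
      have h := hc 0
      simp (config := { decide := true }) [cross, eps, Fin.sum_univ_three] at h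
      linear_combination h
    have C1 : k 2 * (t 0 0 * k 0 + t 0 1 * k 1 + t 0 2 * k 2)
        - k 0 * (t 2 0 * k 0 + t 2 1 * k 1 + t 2 2 * k 2) = 0 := by
      have h := hc 1
      simp (config := { decide := true }) [cross, eps, Fin.sum_univ_three] at h
      linear_combination h
    have C2 : k 0 * (t 1 0 * k 0 + t 1 1 * k 1 + t 1 2 * k 2)
        - k 1 * (t 0 0 * k 0 + t 0 1 * k 1 + t 0 2 * k 2) = 0 := by
      have h := hc 2
      simp (config := { decide := true }) [cross, eps, Fin.sum_univ_three] at h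
      linear_combination h
    set L := k 0 * (t 0 0 * k 0 + t 0 1 * k 1 + t 0 2 * k 2)
      + k 1 * (t 1 0 * k 0 + t 1 1 * k 1 + t 1 2 * k 2)
      + k 2 * (t 2 0 * k 0 + t 2 1 * k 1 + t 2 2 * k 2) with hLdef
    have H0 : K * (t 0 0 * k 0 + t 0 1 * k 1 + t 0 2 * k 2) = L * k 0 := by
      rw [hKdef, hLdef]; linear_combination k 2 * C1 - k 1 * C2
    have H1 : K * (t 1 0 * k 0 + t 1 1 * k 1 + t 1 2 * k 2) = L * k 1 := by
      rw [hKdef, hLdef]; linear_combination k 0 * C2 - k 2 * C0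
    have H2 : K * (t 2 0 * k 0 + t 2 1 * k 1 + t 2 2 * k 2) = L * k 2 := by
      rw [hKdef, hLdef]; linear_combination k 1 * C0 - k 0 * C1
    have hK3 : (4 : ℝ) * K ^ 3 ≠ 0 := by positivity
    have hu : (4 * K ^ 3) * (4 * K ^ 3)⁻¹ = 1 := mul_inv_cancel₀ hK3
    set χ : Fin 3 → Fin 3 → ℝ := fun i j =>
      (-(K ^ 2) * t i j + 6 * L * (k i * k j) - 2 * L * K * kdelta i j) / (4 * K ^ 3)
      with hχdef
    have E00 : sigQ k χ 0 0 = t 0 0 := by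
      simp (config := { decide := true }) only [sigQ, hχdef, Fin.sum_univ_three, kdelta,
        if_true, if_false]
      norm_num
      linear_combination (t 0 0) * hu + ((-8*K*(k 0))/(4*K^3)) * H0
        + ((-2*K^2*(K - k 0 * k 0))/(4*K^3)) * Tr
    have E01 : sigQ k χ 0 1 = t 0 1 := by
      simp (config := { decide := true }) only [sigQ, hχdef, Fin.sum_univ_three, kdelta,
        if_true, if_false]
      norm_num
      linear_combination (t 0 1) * hu + ((-4*K*(k 0))/(4*K^3)) * H1
        + ((-4*K*(k 1))/(4*K^3)) * H0 + ((2*K^2*(k 0 * k 1))/(4*K^3)) * Tr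
    have E02 : sigQ k χ 0 2 = t 0 2 := by
      simp (config := { decide := true }) only [sigQ, hχdef, Fin.sum_univ_three, kdelta,
        if_true, if_false]
      norm_num
      linear_combination (t 0 2) * hu + ((-4*K*(k 0))/(4*K^3)) * H2
        + ((-4*K*(k 2))/(4*K^3)) * H0 + ((2*K^2*(k 0 * k 2))/(4*K^3)) * Tr
    have E10 : sigQ k χ 1 0 = t 1 0 := by
      simp (config := { decide := true }) only [sigQ, hχdef, Fin.sum_univ_three, kdelta,
        if_true, if_false]
      norm_num
      linear_combination (t 1 0) * hu + ((-4*K*(k 1))/(4*K^3)) * H0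
        + ((-4*K*(k 0))/(4*K^3)) * H1 + ((2*K^2*(k 1 * k 0))/(4*K^3)) * Tr
    have E11 : sigQ k χ 1 1 = t 1 1 := by
      simp (config := { decide := true }) only [sigQ, hχdef, Fin.sum_univ_three, kdelta,
        if_true, if_false]
      norm_num
      linear_combination (t 1 1) * hu + ((-8*K*(k 1))/(4*K^3)) * H1
        + ((-2*K^2*(K - k 1 * k 1))/(4*K^3)) * Tr
    have E12 : sigQ k χ 1 2 = t 1 2 := by
      simp (config := { decide := true }) only [sigQ, hχdef, Fin.sum_univ_three, kdelta,
        if_true, if_false]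
      norm_num
      linear_combination (t 1 2) * hu + ((-4*K*(k 1))/(4*K^3)) * H2
        + ((-4*K*(k 2))/(4*K^3)) * H1 + ((2*K^2*(k 1 * k 2))/(4*K^3)) * Tr
    have E20 : sigQ k χ 2 0 = t 2 0 := by
      simp (config := { decide := true }) only [sigQ, hχdef, Fin.sum_univ_three, kdelta,
        if_true, if_false]
      norm_num
      linear_combination (t 2 0) * hu + ((-4*K*(k 2))/(4*K^3)) * H0
        + ((-4*K*(k 0))/(4*K^3)) * H2 + ((2*K^2*(k 2 * k 0))/(4*K^3)) * Tr
    have E21 : sigQ k χ 2 1 = t 2 1 := by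
      simp (config := { decide := true }) only [sigQ, hχdef, Fin.sum_univ_three, kdelta,
        if_true, if_false]
      norm_num
      linear_combination (t 2 1) * hu + ((-4*K*(k 2))/(4*K^3)) * H1
        + ((-4*K*(k 1))/(4*K^3)) * H2 + ((2*K^2*(k 2 * k 1))/(4*K^3)) * Tr
    have E22 : sigQ k χ 2 2 = t 2 2 := by
      simp (config := { decide := true }) only [sigQ, hχdef, Fin.sum_univ_three, kdelta,
        if_true, if_false]
      norm_num
      linear_combination (t 2 2) * hu + ((-8*K*(k 2))/(4*K^3)) * H2
        + ((-2*K^2*(K - k 2 * k 2))/(4*K^3)) * Tr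
    refine ⟨χ, ?_, ?_, ?_⟩
    · intro i j
      simp only [hχdef]
      rw [ht i j, kdelta_symm' i j]
      ring
    · simp only [hχdef, Fin.sum_univ_three, kdelta]
      norm_num
      linear_combination (-(K ^ 2) / (4 * K ^ 3)) * Tr
    · intro i j
      fin_cases i <;> fin_cases j
      · exact E00
      · exact E01
      · exact E02
      · exact E10
      · exact E11
      · exact E12
      · exact E20
      · exact E21
      · exact E22
  · -- easy direction
    intro χ hs htr
    refine ⟨?_, ?_, ?_⟩
    · intro i j
      simp only [sigQ, Fin.sum_univ_three]
      rw [hs i j, kdelta_symm' i j]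
      ring
    · simp only [sigQ, Fin.sum_univ_three, kdelta]
      norm_num
      ring_nf
    · have hv0 : (∑ j, sigQ k χ 0 j * k j)
          = (4/3) * (∑ l, ∑ m, k l * k m * χ l m) * k 0 := by
        simp (config := { decide := true }) only [sigQ, Fin.sum_univ_three, kdelta,
          if_true, if_false]
        norm_num
        ring
      have hv1 : (∑ j, sigQ k χ 1 j * k j)
          = (4/3) * (∑ l, ∑ m, k l * k m * χ l m) * k 1 := by
        simp (config := { decide := true }) only [sigQ, Fin.sum_univ_three, kdelta,
          if_true, if_false]
        norm_num
        ring
      have hv2 : (∑ j, sigQ k χ 2 j * k j)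
          = (4/3) * (∑ l, ∑ m, k l * k m * χ l m) * k 2 := by
        simp (config := { decide := true }) only [sigQ, Fin.sum_univ_three, kdelta,
          if_true, if_false]
        norm_num
        ring
      have key : ∀ i, cross k (fun a => ∑ j, sigQ k χ a j * k j) i = 0 := by
        intro i
        have hcr : cross k (fun a => ∑ j, sigQ k χ a j * k j) i
            = ∑ j, ∑ l, eps i j l * k j * (∑ m, sigQ k χ l m * k m) := rfl
        rw [hcr]
        simp only [Fin.sum_univ_three] at hv0 hv1 hv2 ⊢
        rw [hv0, hv1, hv2] at *
        fin_cases i <;>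
        · simp (config := { decide := true }) only [eps, if_true, if_false]
          norm_num
          ring
      exact key
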